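/- For any de Bruijn sequence x of order k over a q-ary alphabet (viewed as a linear string of length q^k), with k ≥ q+1, the duplication-with-transposition distance from its root satisfies f(x) ≥ (q^k - k + 1)/(2(k-1)). -/

import Mathlib

open scoped BigOperators

/-- One duplication-with-transposition step: `x = a·b·c·d → y = a·b·c·b·d`, `b` non-empty. -/
def DupStep {q : ℕ} (x y : List (Fin q)) : Prop :=
  ∃ a b c d : List (Fin q), b ≠ [] ∧ x = a ++ b ++ c ++ d ∧ y = a ++ b ++ c ++ b ++ d

/-- `DupPath m x y` : `y` is obtained from `x` by exactly `m` duplication steps. -/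
def DupPath {q : ℕ} : ℕ → List (Fin q) → List (Fin q) → Prop
  | 0, x, y => x = y
  | n + 1, x, y => ∃ z, DupStep x z ∧ DupPath n z y

/-- Hamming distance between two lists (of equal length in intended use). -/
def listHammingDist {q : ℕ} (b b' : List (Fin q)) : ℕ :=
  ((b.zip b').filter fun p => decide (p.1 ≠ p.2)).length

/-- One β-approximate duplication-with-transposition step. -/
def ApproxStep {q : ℕ} (β : ℝ) (x y : List (Fin q)) : Prop :=
  ∃ a b c bh d : List (Fin q), b ≠ [] ∧ bh.length = b.length ∧
    (listHammingDist b bh : ℝ) ≤ β * b.length ∧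
    x = a ++ b ++ c ++ d ∧ y = a ++ b ++ c ++ bh ++ d

/-- `ApproxPath β m x y` : `y` obtained from `x` by exactly `m` β-approximate duplications. -/
def ApproxPath {q : ℕ} (β : ℝ) : ℕ → List (Fin q) → List (Fin q) → Prop
  | 0, x, y => x = y
  | n + 1, x, y => ∃ z, ApproxStep β x z ∧ ApproxPath β n z y

/-- The root of a string: the subsequence of first occurrences of symbols. -/
def firstOccs {q : ℕ} (l : List (Fin q)) : List (Fin q) :=
  l.foldl (fun acc a => if a ∈ acc then acc else acc ++ [a]) []

namespace Stmt6Aux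

variable {q : ℕ}

/-- The finite set of length-`k` windows of a list. -/
def winSet (k : ℕ) (l : List (Fin q)) : Finset (List (Fin q)) :=
  (Finset.range (l.length + 1 - k)).image fun i => (l.drop i).take k

lemma mem_winSet {k : ℕ} {l w : List (Fin q)} :
    w ∈ winSet k l ↔ ∃ i, i + k ≤ l.length ∧ (l.drop i).take k = w := by
  simp only [winSet, Finset.mem_image, Finset.mem_range]
  constructor
  · rintro ⟨i, hi, rfl⟩; exact ⟨i, by omega, rfl⟩
  · rintro ⟨i, hi, rfl⟩; exact ⟨i, by omega, rfl⟩

lemma win_congr {l₁ l₂ : List (Fin q)} {i k : ℕ} (h : l₁.take (i + k) = l₂.take (i + k)) :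
    (l₁.drop i).take k = (l₂.drop i).take k := by
  have h1 : (l₁.take (i + k)).drop i = (l₂.take (i + k)).drop i := by rw [h]
  rw [List.drop_take, List.drop_take] at h1
  simpa using h1

lemma step_card {k : ℕ} (hk : 2 ≤ k) {x y : List (Fin q)} (h : DupStep x y) :
    (winSet k y).card ≤ (winSet k x).card + 2 * (k - 1) := by
  obtain ⟨a, b, c, d, -, hx, hy⟩ := h
  set e := a ++ b ++ c with he
  have hx' : x = e ++ d := by simp only [he, hx, List.append_assoc]
  have hy' : y = e ++ (b ++ d) := by simp only [he, hy, List.append_assoc]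
  set p := a.length + b.length + c.length with hp
  have hep : e.length = p := by rw [hp, he]; simp [Nat.add_assoc]
  have hxl : x.length = p + d.length := by rw [hx', List.length_append, hep]
  have hyl : y.length = p + (b.length + d.length) := by
    rw [hy', List.length_append, hep, List.length_append]
  set g : ℕ → List (Fin q) := fun i => (y.drop i).take k with hg
  have hsub : winSet k y ⊆ winSet k x ∪
      ((Finset.Ico (p + 1 - k) p).image g ∪
       (Finset.Ico (p + b.length + 1 - k) (p + b.length)).image g) := by
    intro w hw
    obtain ⟨i, hik, hwin⟩ := mem_winSet.1 hw
    rw [Finset.mem_union, Finset.mem_union]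
    by_cases h1 : i + k ≤ p
    · left
      refine mem_winSet.2 ⟨i, by omega, ?_⟩
      rw [← hwin]
      apply win_congr
      have e1 : x.take (i + k) = e.take (i + k) := by
        rw [hx']; exact List.take_append_of_le_length (by omega)
      have e2 : y.take (i + k) = e.take (i + k) := by
        rw [hy']; exact List.take_append_of_le_length (by omega)
      rw [e1, e2]
    · by_cases h2 : p ≤ i ∧ i + k ≤ p + b.length
      · -- window inside the inserted copy of b
        obtain ⟨h2a, h2b⟩ := h2
        obtain ⟨j, rfl⟩ := Nat.exists_eq_add_of_le h2a
        left
        refine mem_winSet.2 ⟨a.length + j, by omega, ?_⟩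
        rw [← hwin]
        have hyd : y.drop (p + j) = b.drop j ++ d := by
          have hpj : p + j = e.length + j := by omega
          rw [hy', hpj, List.drop_length_add_append, List.drop_append_of_le_length (by omega)]
        have hxd : x.drop (a.length + j) = b.drop j ++ (c ++ d) := by
          have hx2 : x = a ++ (b ++ (c ++ d)) := by simp only [hx, he, List.append_assoc]
          rw [hx2, List.drop_length_add_append, List.drop_append_of_le_length (by omega)]
        rw [hyd, hxd, List.take_append_of_le_length (by simp; omega),
          List.take_append_of_le_length (by simp; omega)]
      · by_cases h3 : p + b.length ≤ i
        · -- window inside d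
          obtain ⟨j, rfl⟩ := Nat.exists_eq_add_of_le h3
          left
          refine mem_winSet.2 ⟨p + j, by omega, ?_⟩
          rw [← hwin]
          have hyd : y.drop (p + b.length + j) = d.drop j := by
            have hy2 : y = (e ++ b) ++ d := by simp only [hy', List.append_assoc]
            have hi : p + b.length + j = (e ++ b).length + j := by
              simp only [List.length_append, hep]
            rw [hy2, hi, List.drop_length_add_append]
          have hxd : x.drop (p + j) = d.drop j := by
            have hpj : p + j = e.length + j := by omega
            rw [hx', hpj, List.drop_length_add_append]
          rw [hyd, hxd]
        · right
          by_cases h4 : i < p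
          · left
            exact Finset.mem_image.2 ⟨i, Finset.mem_Ico.2 ⟨by omega, by omega⟩, hwin⟩
          · right
            exact Finset.mem_image.2 ⟨i, Finset.mem_Ico.2 ⟨by omega, by omega⟩, hwin⟩
  calc (winSet k y).card ≤ _ := Finset.card_le_card hsub
    _ ≤ (winSet k x).card +
        (((Finset.Ico (p + 1 - k) p).image g).card +
         ((Finset.Ico (p + b.length + 1 - k) (p + b.length)).image g).card) := by
        refine (Finset.card_union_le _ _).trans ?_
        exact Nat.add_le_add_left (Finset.card_union_le _ _) _
    _ ≤ (winSet k x).card + 2 * (k - 1) := by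
        have c1 := (Finset.card_image_le (s := Finset.Ico (p + 1 - k) p) (f := g))
        have c2 := (Finset.card_image_le
          (s := Finset.Ico (p + b.length + 1 - k) (p + b.length)) (f := g))
        rw [Nat.card_Ico] at c1 c2
        omega

lemma path_card {k : ℕ} (hk : 2 ≤ k) :
    ∀ m (r x : List (Fin q)), DupPath m r x →
      (winSet k x).card ≤ (winSet k r).card + 2 * (k - 1) * m
  | 0, r, x, h => by
      have : r = x := h
      subst this; simp
  | (m + 1), r, x, h => by
      obtain ⟨z, hs, hpth⟩ := h
      calc (winSet k x).card ≤ (winSet k z).card + 2 * (k - 1) * m :=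
            path_card hk m z x hpth
        _ ≤ ((winSet k r).card + 2 * (k - 1)) + 2 * (k - 1) * m :=
            Nat.add_le_add_right (step_card hk hs) _
        _ = (winSet k r).card + 2 * (k - 1) * (m + 1) := by ring

/-! ### firstOccs lemmas -/

private def f : List (Fin q) → Fin q → List (Fin q) :=
  fun acc a => if a ∈ acc then acc else acc ++ [a]

lemma firstOccs_eq (l : List (Fin q)) : firstOccs l = l.foldl f [] := rfl

lemma subset_foldl : ∀ (l acc : List (Fin q)) (t : Fin q), t ∈ acc → t ∈ l.foldl f acc
  | [], acc, t, ht => ht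
  | (h :: l), acc, t, ht => by
      apply subset_foldl l
      simp only [f]
      split <;> simp [ht]

lemma nodup_foldl : ∀ (l acc : List (Fin q)), acc.Nodup → (l.foldl f acc).Nodup
  | [], acc, h => h
  | (h :: l), acc, hn => by
      apply nodup_foldl l
      simp only [f]
      split
      · exact hn
      · simp [List.nodup_append, hn, *]
        exact fun a ha hah => ‹h ∉ acc› (hah ▸ ha)

lemma foldl_nodup_eq : ∀ (l acc : List (Fin q)), (∀ t ∈ l, t ∉ acc) → l.Nodup →
    l.foldl f acc = acc ++ l
  | [], acc, _, _ => by simp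
  | (h :: l), acc, hd, hn => by
      have hna : h ∉ acc := hd h (by simp)
      have hf : f acc h = acc ++ [h] := by simp [f, hna]
      simp only [List.foldl_cons, hf]
      rw [foldl_nodup_eq l (acc ++ [h]) ?_ ?_]
      · simp
      · intro t ht
        simp only [List.mem_append, List.mem_singleton]
        push_neg
        exact ⟨hd t (by simp [ht]), fun e => (List.nodup_cons.1 hn).1 (e ▸ ht)⟩
      · exact (List.nodup_cons.1 hn).2

lemma firstOccs_of_nodup {l : List (Fin q)} (h : l.Nodup) : firstOccs l = l := by
  rw [firstOccs_eq, foldl_nodup_eq l [] (by simp) h]; simp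

lemma firstOccs_nodup (l : List (Fin q)) : (firstOccs l).Nodup :=
  nodup_foldl l [] List.nodup_nil

lemma firstOccs_delete (a c d : List (Fin q)) (s : Fin q) :
    firstOccs (a ++ s :: (c ++ s :: d)) = firstOccs (a ++ s :: (c ++ d)) := by
  rw [firstOccs_eq, firstOccs_eq]
  rw [List.foldl_append, List.foldl_append, List.foldl_cons, List.foldl_cons]
  set acc1 := f (List.foldl f [] a) s with hacc1
  have hs1 : s ∈ acc1 := by
    simp only [hacc1, f]
    split <;> simp [*]
  rw [List.foldl_append, List.foldl_append, List.foldl_cons]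
  have hs2 : s ∈ List.foldl f acc1 c := subset_foldl c acc1 s hs1
  rw [show f (List.foldl f acc1 c) s = List.foldl f acc1 c by simp [f, hs2]]

lemma not_nodup_decomp : ∀ (x : List (Fin q)), ¬ x.Nodup →
    ∃ a s c d, x = a ++ s :: (c ++ s :: d)
  | [], h => absurd List.nodup_nil h
  | (h :: t), hn => by
      by_cases hm : h ∈ t
      · obtain ⟨c, d, rfl⟩ := List.append_of_mem hm
        exact ⟨[], h, c, d, rfl⟩
      · have : ¬ t.Nodup := fun ht => hn (List.nodup_cons.2 ⟨hm, ht⟩)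
        obtain ⟨a, s, c, d, rfl⟩ := not_nodup_decomp t this
        exact ⟨h :: a, s, c, d, rfl⟩

lemma path_snoc : ∀ m (r z x : List (Fin q)), DupPath m r z → DupStep z x →
    DupPath (m + 1) r x
  | 0, r, z, x, hp, hs => by
      have : r = z := hp
      exact ⟨x, this ▸ hs, rfl⟩
  | (m + 1), r, z, x, hp, hs => by
      obtain ⟨w, h1, h2⟩ := hp
      exact ⟨w, h1, path_snoc m w z x h2 hs⟩

lemma exists_path : ∀ n (x : List (Fin q)), x.length ≤ n →
    ∃ m, DupPath m (firstOccs x) x := by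
  intro n
  induction n with
  | zero =>
      intro x hx
      have : x = [] := List.length_eq_zero_iff.1 (Nat.le_zero.1 hx)
      subst this
      exact ⟨0, rfl⟩
  | succ n ih =>
      intro x hx
      by_cases hnd : x.Nodup
      · exact ⟨0, (firstOccs_of_nodup hnd : DupPath 0 (firstOccs x) x)⟩
      · obtain ⟨a, s, c, d, rfl⟩ := not_nodup_decomp x hnd
        have hlz : (a ++ s :: (c ++ d)).length ≤ n := by
          have h1 := hx
          simp only [List.length_append, List.length_cons] at h1 ⊢
          omega
        obtain ⟨m, hm⟩ := ih (a ++ s :: (c ++ d)) hlz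
        have hfo : firstOccs (a ++ s :: (c ++ d)) = firstOccs (a ++ s :: (c ++ s :: d)) :=
          (firstOccs_delete a c d s).symm
        have hstep : DupStep (a ++ s :: (c ++ d)) (a ++ s :: (c ++ s :: d)) :=
          ⟨a, [s], c, d, by simp, by simp, by simp⟩
        exact ⟨m + 1, path_snoc m _ _ _ (hfo ▸ hm) hstep⟩

end Stmt6Aux

/-- a de Bruijn sequence of order `k ≥ q+1` (as a linear string of
length `q^k`) has duplication distance to its root at least `(q^k-k+1)/(2(k-1))`. -/
theorem stmt6 (q k : ℕ) (hq : 1 ≤ q) (hk : q + 1 ≤ k) (x : List (Fin q))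
    (hlen : x.length = q ^ k)
    (hdb : ∀ b : List (Fin q), b.length = k →
      ∃! i : ℕ, i < q ^ k ∧ ((x ++ x.take (k - 1)).drop i).take k = b) :
    ((q : ℝ) ^ k - (k : ℝ) + 1) / (2 * ((k : ℝ) - 1))
      ≤ ((sInf {m : ℕ | DupPath m (firstOccs x) x} : ℕ) : ℝ) := by
  classical
  have hk2 : 2 ≤ k := by omega
  set r := firstOccs x with hr
  set S := {m : ℕ | DupPath m r x} with hS
  have hSne : S.Nonempty := Stmt6Aux.exists_path x.length x le_rfl
  set m := sInf S with hm
  have hmem : DupPath m r x := Nat.sInf_mem hSne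
  -- root has fewer than k symbols, hence no k-windows
  have hrlen : r.length ≤ q := by
    have := (Stmt6Aux.firstOccs_nodup x).length_le_card
    simpa using this
  have hr0 : (Stmt6Aux.winSet k r).card = 0 := by
    have h0 : r.length + 1 - k = 0 := by omega
    simp [Stmt6Aux.winSet, h0]
  have hcard : (Stmt6Aux.winSet k x).card ≤ 2 * (k - 1) * m := by
    have := Stmt6Aux.path_card hk2 m r x hmem
    omega
  -- de Bruijn property: all windows of x are distinct
  have hinj : Set.InjOn (fun i => (x.drop i).take k)
      ↑(Finset.range (x.length + 1 - k)) := by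
    intro i hi j hj hij
    simp only [Finset.coe_range, Set.mem_Iio] at hi hj
    have hik : i + k ≤ q ^ k := by omega
    have hjk : j + k ≤ q ^ k := by omega
    have hlb : ((x.drop i).take k).length = k := by
      simp only [List.length_take, List.length_drop, hlen]
      omega
    obtain ⟨u, -, huniq⟩ := hdb _ hlb
    have key : ∀ n, n + k ≤ q ^ k → (x.drop n).take k = (x.drop i).take k → n = u := by
      intro n hn he
      apply huniq
      refine ⟨by omega, ?_⟩
      rw [← he]
      apply Stmt6Aux.win_congr
      rw [List.take_append_of_le_length (by omega)]
    have hi' : i = u := key i hik rfl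
    have hj' : j = u := key j hjk (by simpa using hij.symm)
    omega
  have hxcard : (Stmt6Aux.winSet k x).card = q ^ k + 1 - k := by
    rw [Stmt6Aux.winSet, Finset.card_image_of_injOn hinj, Finset.card_range, hlen]
  have hnat : q ^ k + 1 - k ≤ 2 * (k - 1) * m := by omega
  -- pass to the reals
  have hkpos : (0 : ℝ) < 2 * ((k : ℝ) - 1) := by
    have : (2 : ℝ) ≤ (k : ℝ) := by exact_mod_cast hk2
    linarith
  rw [div_le_iff₀ hkpos]
  have hm0 : (0 : ℝ) ≤ (m : ℝ) := Nat.cast_nonneg m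
  by_cases hqk : k ≤ q ^ k
  · have hcast : ((q ^ k + 1 - k : ℕ) : ℝ) = (q : ℝ) ^ k + 1 - k := by
      rw [Nat.cast_sub (by omega)]
      push_cast
      ring
    have h2 : ((q ^ k + 1 - k : ℕ) : ℝ) ≤ ((2 * (k - 1) * m : ℕ) : ℝ) := by
      exact_mod_cast hnat
    have h3 : ((2 * (k - 1) * m : ℕ) : ℝ) = 2 * ((k : ℝ) - 1) * m := by
      rw [Nat.cast_mul, Nat.cast_mul, Nat.cast_sub (by omega)]
      push_cast
      ring
    rw [hcast, h3] at h2
    linarith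
  · have : (q : ℝ) ^ k ≤ (k : ℝ) - 1 := by
      have h1 : q ^ k ≤ k - 1 := by omega
      have := (Nat.cast_le (α := ℝ)).2 h1
      push_cast [Nat.cast_sub (by omega : 1 ≤ k)] at this
      simpa using this
    nlinarith
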